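/- Sp₄(ℤ) is the disjoint union of the double cosets Γ_∞·(Γ×Γ) and Γ_∞·h′_d·(Γ×Γ) for d = 1, 2, 3, …; that is, every element of Sp₄(ℤ) lies in exactly one of these sets. -/

import Mathlib

open Matrix

/-!
STATEMENT 4: Sp₄(ℤ) is the disjoint union of Γ_∞·(Γ×Γ) and Γ_∞·h′_d·(Γ×Γ) for
d = 1,2,3,….  Here Γ = SL₂(ℤ), Γ₂ = Sp₄(ℤ), Γ_∞ is the subgroup of Γ₂ with lower
left 2×2 block zero, Γ×Γ is embedded block-diagonally (interleaved), and h′_d has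
rows (1,0,0,0), (0,1,0,0), (0,d,1,0), (d,0,0,1).  We index the cosets by d ∈ ℕ,
with `h′ 0 = 1` giving the coset Γ_∞·(Γ×Γ).
-/

/-- The standard symplectic form `J = [[0, I₂],[−I₂, 0]]` of size 4 over ℤ. -/
def Jmat : Matrix (Fin 4) (Fin 4) ℤ :=
  !![0, 0, 1, 0; 0, 0, 0, 1; -1, 0, 0, 0; 0, -1, 0, 0]

/-- Membership in `Sp₄(ℤ)`: integral 4×4 matrices with `gᵀ J g = J`. -/
def IsSp4 (g : Matrix (Fin 4) (Fin 4) ℤ) : Prop := gᵀ * Jmat * g = Jmat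

/-- Membership in `Γ_∞`: symplectic with vanishing lower-left 2×2 block `C`. -/
def IsGammaInf (g : Matrix (Fin 4) (Fin 4) ℤ) : Prop :=
  IsSp4 g ∧ g 2 0 = 0 ∧ g 2 1 = 0 ∧ g 3 0 = 0 ∧ g 3 1 = 0

/-- The embedding of `Γ × Γ` into `Γ₂`. -/
def emb (γ₁ γ₂ : Matrix.SpecialLinearGroup (Fin 2) ℤ) : Matrix (Fin 4) (Fin 4) ℤ :=
  !![(γ₁ : Matrix (Fin 2) (Fin 2) ℤ) 0 0, 0, (γ₁ : Matrix (Fin 2) (Fin 2) ℤ) 0 1, 0;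
     0, (γ₂ : Matrix (Fin 2) (Fin 2) ℤ) 0 0, 0, (γ₂ : Matrix (Fin 2) (Fin 2) ℤ) 0 1;
     (γ₁ : Matrix (Fin 2) (Fin 2) ℤ) 1 0, 0, (γ₁ : Matrix (Fin 2) (Fin 2) ℤ) 1 1, 0;
     0, (γ₂ : Matrix (Fin 2) (Fin 2) ℤ) 1 0, 0, (γ₂ : Matrix (Fin 2) (Fin 2) ℤ) 1 1]

/-- The matrix `h′_d`; for `d = 0` this is the identity, corresponding to the coset
`Γ_∞·(Γ×Γ)`. -/
def h' (d : ℕ) : Matrix (Fin 4) (Fin 4) ℤ :=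
  !![1, 0, 0, 0; 0, 1, 0, 0; 0, (d : ℤ), 1, 0; (d : ℤ), 0, 0, 1]


open Matrix
abbrev M2 := Matrix (Fin 2) (Fin 2) ℤ
abbrev SL2 := Matrix.SpecialLinearGroup (Fin 2) ℤ


def X0 (d : ℤ) : M2 := !![0,1;d,0]
def Y0 (d : ℤ) : M2 := !![d,0;0,1]

def Wm (X Y : M2) : Matrix (Fin 2) (Fin 4) ℤ :=
  !![X 0 0, Y 0 0, X 0 1, Y 0 1; X 1 0, Y 1 0, X 1 1, Y 1 1]

def stk (V W : Matrix (Fin 2) (Fin 4) ℤ) : Matrix (Fin 4) (Fin 4) ℤ :=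
  Matrix.of ![V 0, V 1, W 0, W 1]

def blk (A : M2) : Matrix (Fin 4) (Fin 4) ℤ :=
  !![1,0,0,0; 0,1,0,0; 0,0,A 0 0,A 0 1; 0,0,A 1 0,A 1 1]

def Prim (X Y : M2) : Prop := ∃ V, IsUnit ((stk V (Wm X Y)).det)

def Decomp (X Y : M2) : Prop := ∃ (d : ℕ) (M : M2) (γ₁ γ₂ : SL2),
  X = M * X0 d * γ₁ ∧ Y = M * Y0 d * γ₂

lemma det4 (g : Matrix (Fin 4) (Fin 4) ℤ) : g.det =
    g 0 0 * (g 1 1 * (g 2 2 * g 3 3 - g 2 3 * g 3 2) - g 1 2 * (g 2 1 * g 3 3 - g 2 3 * g 3 1) + g 1 3 * (g 2 1 * g 3 2 - g 2 2 * g 3 1))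
  - g 0 1 * (g 1 0 * (g 2 2 * g 3 3 - g 2 3 * g 3 2) - g 1 2 * (g 2 0 * g 3 3 - g 2 3 * g 3 0) + g 1 3 * (g 2 0 * g 3 2 - g 2 2 * g 3 0))
  + g 0 2 * (g 1 0 * (g 2 1 * g 3 3 - g 2 3 * g 3 1) - g 1 1 * (g 2 0 * g 3 3 - g 2 3 * g 3 0) + g 1 3 * (g 2 0 * g 3 1 - g 2 1 * g 3 0))
  - g 0 3 * (g 1 0 * (g 2 1 * g 3 2 - g 2 2 * g 3 1) - g 1 1 * (g 2 0 * g 3 2 - g 2 2 * g 3 0) + g 1 2 * (g 2 0 * g 3 1 - g 2 1 * g 3 0)) := by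
  rw [show g = !![g 0 0, g 0 1, g 0 2, g 0 3; g 1 0, g 1 1, g 1 2, g 1 3;
      g 2 0, g 2 1, g 2 2, g 2 3; g 3 0, g 3 1, g 3 2, g 3 3] by
    ext i j; fin_cases i <;> fin_cases j <;> rfl]
  simp [Matrix.det_succ_row_zero, Fin.sum_univ_succ, show ((1:Fin 4).succAbove 2) = 3 from rfl, show ((2:Fin 4).succAbove 2) = 3 from rfl, show (Fin.castSucc 2 : Fin 4) = 2 from rfl, show ((3:Fin 4).succAbove 2) = 2 from rfl]
  ring

lemma detg1 (γ : SL2) : (γ : M2) 0 0 * (γ : M2) 1 1 - (γ : M2) 0 1 * (γ : M2) 1 0 = 1 := by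
  have := γ.prop
  rwa [Matrix.det_fin_two] at this

lemma stk_mul (V W : Matrix (Fin 2) (Fin 4) ℤ) (E : Matrix (Fin 4) (Fin 4) ℤ) :
    stk V W * E = stk (V * E) (W * E) := by
  ext i j
  fin_cases i <;> simp [stk, Matrix.mul_apply]

lemma stk_blk (V W : Matrix (Fin 2) (Fin 4) ℤ) (A : M2) :
    stk V (A * W) = blk A * stk V W := by
  ext i j
  fin_cases i <;> simp [stk, blk, Matrix.mul_apply, Fin.sum_univ_four, Fin.sum_univ_two]

lemma det_blk (A : M2) : (blk A).det = A.det := by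
  rw [det4, Matrix.det_fin_two]; simp [blk]

lemma det_emb (γ₁ γ₂ : SL2) : (emb γ₁ γ₂).det = 1 := by
  rw [det4]
  simp [emb]
  linear_combination (((γ₁ : M2) 0 0 * (γ₁ : M2) 1 1 - (γ₁ : M2) 0 1 * (γ₁ : M2) 1 0)) * detg1 γ₂ + detg1 γ₁

lemma Wm_right (X Y : M2) (γ₁ γ₂ : SL2) :
    Wm (X * γ₁) (Y * γ₂) = Wm X Y * emb γ₁ γ₂ := by
  ext i j
  fin_cases i <;> fin_cases j <;>
    simp [Wm, emb, Matrix.mul_apply, Fin.sum_univ_four, Fin.sum_univ_two]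

lemma Wm_left (X Y : M2) (A : M2) : Wm (A * X) (A * Y) = A * Wm X Y := by
  ext i j
  fin_cases i <;> fin_cases j <;>
    simp [Wm, Matrix.mul_apply, Fin.sum_univ_two]

lemma prim_transform {X Y : M2} (A B : M2) (hAB : A * B = 1) (γ₁ γ₂ : SL2)
    (h : Prim X Y) : Prim (A * X * γ₁) (A * Y * γ₂) := by
  obtain ⟨V, hV⟩ := h
  refine ⟨V * emb γ₁ γ₂, ?_⟩
  have : Wm (A * X * γ₁) (A * Y * γ₂) = (A * Wm X Y) * emb γ₁ γ₂ := by
    rw [Wm_right, Wm_left]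
  rw [this, ← stk_mul, stk_blk, Matrix.det_mul, Matrix.det_mul, det_emb, det_blk, mul_one]
  have hdet : A.det * B.det = 1 := by rw [← Matrix.det_mul, hAB, Matrix.det_one]
  exact (IsUnit.of_mul_eq_one _ hdet).mul hV

lemma cancel_key (A B : M2) (hBA : B * A = 1) (Z : M2) (γ : SL2) :
    B * (A * Z * (γ : M2)) * ((γ⁻¹ : SL2) : M2) = Z := by
  have hγ : (γ : M2) * ((γ⁻¹ : SL2) : M2) = 1 := by
    rw [← Matrix.SpecialLinearGroup.coe_mul, mul_inv_cancel]; rfl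
  rw [← Matrix.mul_assoc B, ← Matrix.mul_assoc B A Z, hBA, Matrix.one_mul,
    Matrix.mul_assoc, hγ, Matrix.mul_one]

lemma decomp_pull {X Y : M2} (A B : M2) (hAB : A * B = 1) (γ₁ γ₂ : SL2)
    (h : Decomp (A * X * γ₁) (A * Y * γ₂)) : Decomp X Y := by
  obtain ⟨d, M, δ₁, δ₂, h1, h2⟩ := h
  have hBA : B * A = 1 := mul_eq_one_comm.mp hAB
  refine ⟨d, B * M, δ₁ * γ₁⁻¹, δ₂ * γ₂⁻¹, ?_, ?_⟩
  · rw [← cancel_key A B hBA X γ₁, h1]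
    simp [Matrix.SpecialLinearGroup.coe_mul, Matrix.mul_assoc]
  · rw [← cancel_key A B hBA Y γ₂, h2]
    simp [Matrix.SpecialLinearGroup.coe_mul, Matrix.mul_assoc]

def Sg : SL2 := ⟨!![0,-1;1,0], by norm_num [Matrix.det_fin_two]⟩
def Tg (k : ℤ) : SL2 := ⟨!![1,k;0,1], by norm_num [Matrix.det_fin_two]⟩
def Lg (k : ℤ) : SL2 := ⟨!![1,0;k,1], by norm_num [Matrix.det_fin_two]⟩

lemma eq_diag (Z : M2) (h1 : Z 0 1 = 0) (h2 : Z 1 0 = 0) : ∃ a b : ℤ, Z = !![a,0;0,b] :=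
  ⟨Z 0 0, Z 1 1, by ext i j; fin_cases i <;> fin_cases j <;> simp [h1, h2]⟩

lemma smith_aux : ∀ n : ℕ, ∀ X : M2, (X 0 0).natAbs = n → X 0 0 ≠ 0 →
    ∃ (M γ : SL2) (a b : ℤ), (M : M2) * X * (γ : M2) = !![a,0;0,b] := by
  intro n
  induction n using Nat.strong_induction_on with
  | _ n IH =>
  intro X hn h0
  by_cases hc : X 0 0 ∣ X 1 0
  · by_cases hb : X 0 0 ∣ X 0 1
    · obtain ⟨q, hq⟩ := hc
      obtain ⟨q', hq'⟩ := hb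
      refine ⟨Lg (-q), Tg (-q'), ?_⟩
      apply eq_diag
      · simp [Lg, Tg, Matrix.mul_apply, Matrix.vecMul, dotProduct, Fin.sum_univ_two]
        linear_combination hq'
      · simp [Lg, Tg, Matrix.mul_apply, Matrix.vecMul, dotProduct, Fin.sum_univ_two]
        linear_combination hq
    · -- column reduction
      set r := X 0 1 % X 0 0 with hr
      set q := X 0 1 / X 0 0 with hqd
      have hre : X 0 0 * q + r = X 0 1 := Int.mul_ediv_add_emod _ _
      have hrne : r ≠ 0 := fun h => hb (Int.dvd_of_emod_eq_zero h)
      have hrlt : r.natAbs < n := by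
        have h1 : 0 ≤ r := Int.emod_nonneg _ h0
        have h2 : r < |X 0 0| := Int.emod_lt_abs _ h0
        rw [← hn, Int.abs_eq_natAbs] at *
        omega
      set X' : M2 := X * ((Tg (-q) * Sg : SL2) : M2) with hX'
      have hX00 : X' 0 0 = r := by
        rw [hX', Matrix.SpecialLinearGroup.coe_mul]
        simp [hX', Tg, Sg, Matrix.SpecialLinearGroup.coe_mul, Matrix.mul_apply, Matrix.vecMul, dotProduct,
          Fin.sum_univ_two]
        linear_combination -hre
      obtain ⟨M, γ, a, b, hMγ⟩ := IH r.natAbs hrlt X' (by rw [hX00]) (by rw [hX00]; exact hrne)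
      refine ⟨M, (Tg (-q) * Sg) * γ, a, b, ?_⟩
      rw [← hMγ, hX']
      simp [Matrix.SpecialLinearGroup.coe_mul, Matrix.mul_assoc]
  · -- row reduction
    set r := X 1 0 % X 0 0 with hr
    set q := X 1 0 / X 0 0 with hqd
    have hre : X 0 0 * q + r = X 1 0 := Int.mul_ediv_add_emod _ _
    have hrne : r ≠ 0 := fun h => hc (Int.dvd_of_emod_eq_zero h)
    have hrlt : r.natAbs < n := by
      have h1 : 0 ≤ r := Int.emod_nonneg _ h0
      have h2 : r < |X 0 0| := Int.emod_lt_abs _ h0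
      rw [← hn, Int.abs_eq_natAbs] at *
      omega
    set X' : M2 := ((Sg * Lg (-q) : SL2) : M2) * X with hX'
    have hX00 : X' 0 0 = -r := by
      rw [hX', Matrix.SpecialLinearGroup.coe_mul]
      simp [hX', Tg, Sg, Lg, Matrix.SpecialLinearGroup.coe_mul, Matrix.mul_apply, Matrix.vecMul, dotProduct,
        Fin.sum_univ_two]
      linear_combination hre
    obtain ⟨M, γ, a, b, hMγ⟩ := IH r.natAbs hrlt X'
      (by rw [hX00]; exact Int.natAbs_neg r)
      (by rw [hX00]; simpa using hrne)
    refine ⟨M * (Sg * Lg (-q)), γ, a, b, ?_⟩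
    rw [← hMγ, hX']
    simp [Matrix.SpecialLinearGroup.coe_mul, Matrix.mul_assoc]

lemma smith (X : M2) : ∃ (M γ : SL2) (a b : ℤ), (M : M2) * X * (γ : M2) = !![a,0;0,b] := by
  by_cases h00 : X 0 0 ≠ 0
  · exact smith_aux _ X rfl h00
  push_neg at h00
  by_cases h10 : X 1 0 ≠ 0
  · have h : ((Sg : M2) * X) 0 0 ≠ 0 := by
      simp [Sg, Matrix.mul_apply, Matrix.vecMul, dotProduct, Fin.sum_univ_two, h10]
    obtain ⟨M, γ, a, b, hMγ⟩ := smith_aux _ ((Sg : M2) * X) rfl h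
    exact ⟨M * Sg, γ, a, b, by rw [← hMγ]; simp [Matrix.SpecialLinearGroup.coe_mul, Matrix.mul_assoc]⟩
  push_neg at h10
  by_cases h01 : X 0 1 ≠ 0
  · have h : (X * (Sg : M2)) 0 0 ≠ 0 := by
      simp [Sg, Matrix.mul_apply, Matrix.vecMul, dotProduct, Fin.sum_univ_two, h01]
    obtain ⟨M, γ, a, b, hMγ⟩ := smith_aux _ (X * (Sg : M2)) rfl h
    exact ⟨M, Sg * γ, a, b, by rw [← hMγ]; simp [Matrix.SpecialLinearGroup.coe_mul, Matrix.mul_assoc]⟩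
  push_neg at h01
  by_cases h11 : X 1 1 ≠ 0
  · have h : ((Sg : M2) * X * (Sg : M2)) 0 0 ≠ 0 := by
      simp [Sg, Matrix.mul_apply, Matrix.vecMul, dotProduct, Fin.sum_univ_two, h11]
    obtain ⟨M, γ, a, b, hMγ⟩ := smith_aux _ ((Sg : M2) * X * (Sg : M2)) rfl h
    exact ⟨M * Sg, Sg * γ, a, b, by rw [← hMγ]; simp [Matrix.SpecialLinearGroup.coe_mul, Matrix.mul_assoc]⟩
  push_neg at h11
  refine ⟨1, 1, 0, 0, ?_⟩
  have : X = !![0,0;0,0] := by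
    ext i j; fin_cases i <;> fin_cases j <;> assumption
  rw [this]
  ext i j; fin_cases i <;> fin_cases j <;> simp [Matrix.mul_apply, Matrix.vecMul, dotProduct, Fin.sum_univ_two]

lemma row_reduce (r s : ℤ) : ∃ γ : SL2,
    r * (γ : M2) 0 0 + s * (γ : M2) 1 0 = (Int.gcd r s : ℤ) ∧
    r * (γ : M2) 0 1 + s * (γ : M2) 1 1 = 0 := by
  by_cases h : r = 0 ∧ s = 0
  · refine ⟨1, ?_, ?_⟩ <;> simp [h.1, h.2]
  · set g : ℤ := (Int.gcd r s : ℤ) with hgdef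
    have hg : g ≠ 0 := by
      simp only [hgdef, ne_eq, Int.natCast_eq_zero, Int.gcd_eq_zero_iff]
      tauto
    have hbez : g = r * Int.gcdA r s + s * Int.gcdB r s := Int.gcd_eq_gcd_ab r s
    obtain ⟨r', hr'⟩ : g ∣ r := Int.gcd_dvd_left _ _
    obtain ⟨s', hs'⟩ : g ∣ s := Int.gcd_dvd_right _ _
    have hdet : Int.gcdA r s * r' - -s' * Int.gcdB r s = 1 := by
      apply mul_left_cancel₀ hg
      rw [mul_one]
      linear_combination (-1 : ℤ) * hbez + (- Int.gcdA r s) * hr' + (- Int.gcdB r s) * hs'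
    refine ⟨⟨!![Int.gcdA r s, -s'; Int.gcdB r s, r'], by
      rw [Matrix.det_fin_two]; simpa using hdet⟩, ?_, ?_⟩
    · simpa using hbez.symm
    · show r * (-s') + s * r' = 0
      apply mul_left_cancel₀ hg
      rw [mul_zero]
      linear_combination (-g*s') * hr' + (g*r') * hs'

lemma laplace (V W : Matrix (Fin 2) (Fin 4) ℤ) :
    (stk V W).det =
      (V 0 0 * V 1 1 - V 0 1 * V 1 0) * (W 0 2 * W 1 3 - W 0 3 * W 1 2)
    - (V 0 0 * V 1 2 - V 0 2 * V 1 0) * (W 0 1 * W 1 3 - W 0 3 * W 1 1)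
    + (V 0 0 * V 1 3 - V 0 3 * V 1 0) * (W 0 1 * W 1 2 - W 0 2 * W 1 1)
    + (V 0 1 * V 1 2 - V 0 2 * V 1 1) * (W 0 0 * W 1 3 - W 0 3 * W 1 0)
    - (V 0 1 * V 1 3 - V 0 3 * V 1 1) * (W 0 0 * W 1 2 - W 0 2 * W 1 0)
    + (V 0 2 * V 1 3 - V 0 3 * V 1 2) * (W 0 0 * W 1 1 - W 0 1 * W 1 0) := by
  rw [det4]
  simp [stk]
  ring
section STEPS

lemma decomp_base (δ : ℤ) (hδ : 0 ≤ δ) : Decomp (X0 δ) (Y0 δ) := by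
  refine ⟨δ.toNat, 1, 1, 1, ?_, ?_⟩ <;>
    simp [X0, Y0, Int.toNat_of_nonneg hδ]

lemma step2 (δ : ℤ) (hδ : 0 ≤ δ) (Y : M2) (hdet : Y.det = δ)
    (hprim : Prim (X0 δ) Y) : Decomp (X0 δ) Y := by
  obtain ⟨γ, hγ1, hγ2⟩ := row_reduce (Y 1 0) (Y 1 1)
  set t : ℤ := ((Y 1 0).gcd (Y 1 1) : ℤ) with ht
  set Y1 : M2 := Y * (γ : M2) with hY1
  have hY110 : Y1 1 0 = t := by
    simp only [hY1, Matrix.mul_apply, Fin.sum_univ_two]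
    linear_combination hγ1
  have hY111 : Y1 1 1 = 0 := by
    simp only [hY1, Matrix.mul_apply, Fin.sum_univ_two]
    linear_combination hγ2
  have hdet1 : Y1.det = δ := by
    rw [hY1, Matrix.det_mul, γ.prop, mul_one, hdet]
  set p : ℤ := Y1 0 0 with hp
  set q : ℤ := Y1 0 1 with hq
  have hδqt : δ = -(q * t) := by
    have h2 := Matrix.det_fin_two Y1
    rw [hY110, hY111, hdet1] at h2
    linear_combination h2
  have hprim1 : Prim (X0 δ) Y1 := by
    have h3 := prim_transform (1 : M2) 1 (by simp) 1 γ hprim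
    simpa [← hY1] using h3
  obtain ⟨V, hV⟩ := hprim1
  have hdvd : t ∣ (stk V (Wm (X0 δ) Y1)).det := by
    refine ⟨q * (V 0 0 * V 1 2 - V 0 2 * V 1 0) - (V 0 0 * V 1 3 - V 0 3 * V 1 0)
      + q^2 * (V 0 1 * V 1 2 - V 0 2 * V 1 1) - q * (V 0 1 * V 1 3 - V 0 3 * V 1 1)
      + p * q * (V 0 2 * V 1 3 - V 0 3 * V 1 2), ?_⟩
    rw [laplace]
    simp [Wm, X0, hY110, hY111]
    linear_combination (-(q * (V 0 1 * V 1 2 - V 0 2 * V 1 1)) + (V 0 1 * V 1 3 - V 0 3 * V 1 1)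
      - p * (V 0 2 * V 1 3 - V 0 3 * V 1 2)) * hδqt
  have hunit : IsUnit t := isUnit_of_dvd_unit hdvd hV
  have ht0 : 0 ≤ t := Int.natCast_nonneg _
  have ht1 : t = 1 := by
    rcases Int.isUnit_iff.mp hunit with h | h
    · exact h
    · omega
  have hqδ : q = -δ := by rw [ht1] at hδqt; linarith
  have hY1eq : Y1 = !![p, -δ; 1, 0] := by
    rw [Matrix.eta_fin_two Y1, hY110, hY111, ht1, ← hp, ← hq, hqδ]
  -- undo the γ column operation
  apply decomp_pull (1 : M2) 1 (by simp) 1 γ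
  rw [show (1 : M2) * X0 δ * ((1 : SL2) : M2) = X0 δ by simp,
      show (1 : M2) * Y * (γ : M2) = Y1 by simp [hY1]]
  -- final normalization
  apply decomp_pull !![(-1 : ℤ), p; 0, -1] !![(-1 : ℤ), -p; 0, -1]
    (by ext i j; fin_cases i <;> fin_cases j <;> simp)
    ⟨!![(-1 : ℤ), 0; -(p*δ), -1], by simp [Matrix.det_fin_two]⟩ Sg
  rw [show !![(-1 : ℤ), p; 0, -1] * X0 δ *
        ((⟨!![(-1 : ℤ), 0; -(p*δ), -1], by simp [Matrix.det_fin_two]⟩ : SL2) : M2) = X0 δ by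
      ext i j; fin_cases i <;> fin_cases j <;>
        simp [X0, Matrix.mul_apply, Matrix.vecMul, dotProduct, Fin.sum_univ_two] <;> ring,
      show !![(-1 : ℤ), p; 0, -1] * Y1 * ((Sg : SL2) : M2) = Y0 δ by
      rw [hY1eq]
      ext i j; fin_cases i <;> fin_cases j <;>
        simp [Y0, Sg, Matrix.mul_apply, Matrix.vecMul, dotProduct, Fin.sum_univ_two]]
  exact decomp_base δ hδ

end STEPS

def Sg' : SL2 := ⟨!![0,1;-1,0], by norm_num [Matrix.det_fin_two]⟩

lemma step1 (a b : ℤ) (Y : M2) (hsym : (!![a,0;0,b] : M2).det + Y.det = 0)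
    (hprim : Prim !![a,0;0,b] Y) : Decomp !![a,0;0,b] Y := by
  have hdetY : Y.det = -(a*b) := by
    rw [Matrix.det_fin_two_of] at hsym; linarith
  have hY : Y 0 0 * Y 1 1 - Y 0 1 * Y 1 0 = -(a*b) := by
    rw [← Matrix.det_fin_two]; exact hdetY
  -- coprimality of a and b
  set gg : ℤ := (a.gcd b : ℤ) with hgg
  obtain ⟨a', ha'⟩ : gg ∣ a := Int.gcd_dvd_left _ _
  obtain ⟨b', hb'⟩ : gg ∣ b := Int.gcd_dvd_right _ _
  have hprimcopy := hprim
  obtain ⟨V, hV⟩ := hprimcopy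
  have hdvd : gg ∣ (stk V (Wm !![a,0;0,b] Y)).det := by
    refine ⟨-(V 0 0 * V 1 1 - V 0 1 * V 1 0) * b' * Y 0 1
      + (V 0 0 * V 1 2 - V 0 2 * V 1 0) * a * b'
      + (V 0 0 * V 1 3 - V 0 3 * V 1 0) * b' * Y 0 0
      + (V 0 1 * V 1 2 - V 0 2 * V 1 1) * a' * Y 1 1
      - (V 0 1 * V 1 3 - V 0 3 * V 1 1) * a * b'
      + (V 0 2 * V 1 3 - V 0 3 * V 1 2) * a' * Y 1 0, ?_⟩
    rw [laplace]
    simp [Wm]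
    linear_combination (-(V 0 0 * V 1 2 - V 0 2 * V 1 0)) * hY
      + ((V 0 1 * V 1 2 - V 0 2 * V 1 1) * Y 1 1 + (V 0 2 * V 1 3 - V 0 3 * V 1 2) * Y 1 0) * ha'
      + (-(V 0 0 * V 1 1 - V 0 1 * V 1 0) * Y 0 1 + (V 0 0 * V 1 3 - V 0 3 * V 1 0) * Y 0 0
         - (V 0 1 * V 1 3 - V 0 3 * V 1 1) * a + (V 0 0 * V 1 2 - V 0 2 * V 1 0) * a) * hb'
  have hunit : IsUnit gg := isUnit_of_dvd_unit hdvd hV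
  have hcop : IsCoprime a b := by
    rw [Int.isCoprime_iff_gcd_eq_one]
    rcases Int.isUnit_iff.mp hunit with h | h <;> omega
  obtain ⟨u, v, hbez⟩ := hcop
  -- merge into diag(1, ab)
  set A : M2 := !![u, v; -b, a] with hA
  set B : M2 := !![a, -v; b, u] with hB
  have hAB : A * B = 1 := by
    ext i j; fin_cases i <;> fin_cases j <;>
      simp [hA, hB, Matrix.mul_apply, Matrix.vecMul, dotProduct, Fin.sum_univ_two] <;>
      first
        | ring1
        | linear_combination hbez
        | linear_combination -hbez
  set γm : SL2 := ⟨!![1, -(v*b); 1, u*a], by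
    rw [Matrix.det_fin_two]; simp; linear_combination hbez⟩ with hγm
  have hXeq : A * !![a,0;0,b] * (γm : M2) = !![1,0;0,a*b] := by
    ext i j; fin_cases i <;> fin_cases j <;>
      simp [hA, hγm, Matrix.mul_apply, Matrix.vecMul, dotProduct, Fin.sum_univ_two] <;>
      first
        | ring1
        | linear_combination hbez
        | linear_combination -hbez
        | linear_combination (a*b) * hbez
        | linear_combination (-(a*b)) * hbez
        | linear_combination (2-a*b) * hbez
        | linear_combination (a*b-2) * hbez
  have hprim1 := prim_transform A B hAB γm 1 hprim
  rw [hXeq] at hprim1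
  apply decomp_pull A B hAB γm 1
  rw [hXeq]
  set Y1 : M2 := A * Y * ((1 : SL2) : M2) with hY1
  have hdetY1 : Y1.det = -(a*b) := by
    rw [hY1, Matrix.det_mul, Matrix.det_mul, hdetY]
    have : A.det = 1 := by rw [hA, Matrix.det_fin_two_of]; linear_combination hbez
    rw [this]
    simp
  rcases le_or_gt 0 (a*b) with he | he
  · -- ab ≥ 0
    have hX2 : (!![(-1:ℤ),0;0,1] : M2) * !![1,0;0,a*b] * (Sg : M2) = X0 (a*b) := by
      ext i j; fin_cases i <;> fin_cases j <;>
        simp [Sg, X0, Matrix.mul_apply, Matrix.vecMul, dotProduct, Fin.sum_univ_two]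
    have hprim2 := prim_transform !![(-1:ℤ),0;0,1] !![(-1:ℤ),0;0,1]
      (by ext i j; fin_cases i <;> fin_cases j <;> simp) Sg 1 hprim1
    rw [hX2] at hprim2
    apply decomp_pull !![(-1:ℤ),0;0,1] !![(-1:ℤ),0;0,1]
      (by ext i j; fin_cases i <;> fin_cases j <;> simp) Sg 1
    rw [hX2]
    refine step2 (a*b) he _ ?_ hprim2
    rw [Matrix.det_mul, Matrix.det_mul, hdetY1]
    norm_num [Matrix.det_fin_two_of]
  · -- ab < 0
    have hX2 : (1 : M2) * !![1,0;0,a*b] * (Sg' : M2) = X0 (-(a*b)) := by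
      ext i j; fin_cases i <;> fin_cases j <;>
        simp [Sg', X0, Matrix.mul_apply, Matrix.vecMul, dotProduct, Fin.sum_univ_two]
    have hprim2 := prim_transform 1 1 (by simp) Sg' 1 hprim1
    rw [hX2] at hprim2
    apply decomp_pull 1 1 (by simp) Sg' 1
    rw [hX2]
    refine step2 (-(a*b)) (by linarith) _ ?_ hprim2
    rw [Matrix.det_mul, Matrix.det_mul, hdetY1]
    norm_num

lemma key (X Y : M2) (hsym : X.det + Y.det = 0) (hprim : Prim X Y) : Decomp X Y := by
  obtain ⟨M, γ, a, b, hMγ⟩ := smith X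
  have hMB : (M : M2) * ((M⁻¹ : SL2) : M2) = 1 := by
    rw [← Matrix.SpecialLinearGroup.coe_mul, mul_inv_cancel]; rfl
  have hprim1 := prim_transform (M : M2) ((M⁻¹ : SL2) : M2) hMB γ 1 hprim
  rw [hMγ] at hprim1
  apply decomp_pull (M : M2) ((M⁻¹ : SL2) : M2) hMB γ 1
  rw [hMγ]
  apply step1 a b _ ?_ hprim1
  rw [Matrix.det_mul, Matrix.det_mul, ← hMγ]
  rw [Matrix.det_mul, Matrix.det_mul]
  have h1 : ((M : M2)).det = 1 := M.prop
  have h2 : ((γ : M2)).det = 1 := γ.prop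
  simp [h1, h2]
  linarith


def hinv (d : ℕ) : Matrix (Fin 4) (Fin 4) ℤ :=
  !![1, 0, 0, 0; 0, 1, 0, 0; 0, -(d : ℤ), 1, 0; -(d : ℤ), 0, 0, 1]

lemma JJ : Jmat * Jmat = -1 := by
  ext i j
  fin_cases i <;> fin_cases j <;>
    simp [Jmat, Matrix.mul_apply, Fin.sum_univ_four, Matrix.one_apply,
      Matrix.vecHead, Matrix.vecTail]

lemma sp4_mul {g h : Matrix (Fin 4) (Fin 4) ℤ} (hg : IsSp4 g) (hh : IsSp4 h) :
    IsSp4 (g * h) := by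
  unfold IsSp4 at *
  rw [Matrix.transpose_mul]
  calc hᵀ * gᵀ * Jmat * (g * h) = hᵀ * (gᵀ * Jmat * g) * h := by
        simp only [Matrix.mul_assoc]
    _ = Jmat := by rw [hg]; exact hh






lemma sp4_gJgT {g : Matrix (Fin 4) (Fin 4) ℤ} (hg : IsSp4 g) : g * Jmat * gᵀ = Jmat := by
  have h1 : Jmat * gᵀ * Jmat * g = -1 := by
    calc Jmat * gᵀ * Jmat * g = Jmat * (gᵀ * Jmat * g) := by simp only [Matrix.mul_assoc]
      _ = Jmat * Jmat := by rw [hg]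
      _ = -1 := JJ
  have h2 : (-(Jmat * gᵀ * Jmat)) * g = 1 := by rw [Matrix.neg_mul, h1, neg_neg]
  have h3 : g * (-(Jmat * gᵀ * Jmat)) = 1 := mul_eq_one_comm.mp h2
  have h4 : g * (Jmat * gᵀ * Jmat) = -1 := by
    have h3' : -(g * (Jmat * gᵀ * Jmat)) = 1 := by rw [← Matrix.mul_neg]; exact h3
    have := congrArg Neg.neg h3'
    simpa using this
  have h5 := congrArg (fun m => m * Jmat) h4
  beta_reduce at h5
  calc g * Jmat * gᵀ = g * Jmat * gᵀ * 1 := by rw [Matrix.mul_one]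
    _ = g * Jmat * gᵀ * (-(Jmat * Jmat)) := by rw [JJ]; simp
    _ = -(g * (Jmat * gᵀ * Jmat) * Jmat) := by
        simp only [Matrix.mul_neg, Matrix.neg_mul, Matrix.mul_assoc]
    _ = -(-1 * Jmat) := by rw [h4]
    _ = Jmat := by simp

lemma detJ : Jmat.det = 1 := by rw [det4]; norm_num [Jmat, Matrix.cons_val_two, Matrix.cons_val_three]

lemma sp4_detUnit {g : Matrix (Fin 4) (Fin 4) ℤ} (hg : IsSp4 g) : IsUnit g.det := by
  have := congrArg Matrix.det hg
  rw [Matrix.det_mul, Matrix.det_mul, Matrix.det_transpose, detJ, mul_one] at this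
  exact IsUnit.of_mul_eq_one _ this

def Wof (g : Matrix (Fin 4) (Fin 4) ℤ) : Matrix (Fin 2) (Fin 4) ℤ :=
  Matrix.of ![g 2, g 3]

lemma Wof_mul (g h : Matrix (Fin 4) (Fin 4) ℤ) : Wof (g * h) = Wof g * h := by
  ext i j
  fin_cases i <;> simp [Wof, Matrix.mul_apply]

def Xg (g : Matrix (Fin 4) (Fin 4) ℤ) : M2 := !![g 2 0, g 2 2; g 3 0, g 3 2]
def Yg (g : Matrix (Fin 4) (Fin 4) ℤ) : M2 := !![g 2 1, g 2 3; g 3 1, g 3 3]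

lemma Wof_eq (g : Matrix (Fin 4) (Fin 4) ℤ) : Wof g = Wm (Xg g) (Yg g) := by
  ext i j
  fin_cases i <;> fin_cases j <;> simp [Wof, Wm, Xg, Yg]

lemma stk_eq (g : Matrix (Fin 4) (Fin 4) ℤ) :
    stk (Matrix.of ![g 0, g 1]) (Wm (Xg g) (Yg g)) = g := by
  ext i j
  fin_cases i <;> fin_cases j <;> simp [stk, Wm, Xg, Yg]

lemma Wof_h' (d : ℕ) : Wof (h' d) = Wm (X0 (d : ℤ)) (Y0 (d : ℤ)) := by
  ext i j
  fin_cases i <;> fin_cases j <;> simp [Wof, Wm, X0, Y0, h']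

lemma h'_hinv (d : ℕ) : h' d * hinv d = 1 := by
  ext i j
  simp only [Matrix.mul_apply, Fin.sum_univ_four]
  fin_cases i <;> fin_cases j <;>
    norm_num [h', hinv, Matrix.one_apply, Matrix.vecHead, Matrix.vecTail, Matrix.cons_val_two, Matrix.cons_val_three] <;> decide

lemma hinv_h' (d : ℕ) : hinv d * h' d = 1 := by
  ext i j
  simp only [Matrix.mul_apply, Fin.sum_univ_four]
  fin_cases i <;> fin_cases j <;>
    norm_num [h', hinv, Matrix.one_apply, Matrix.vecHead, Matrix.vecTail, Matrix.cons_val_two, Matrix.cons_val_three] <;> decide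

lemma sp4_h' (d : ℕ) : IsSp4 (h' d) := by
  unfold IsSp4
  ext i j
  simp only [Matrix.mul_apply, Matrix.transpose_apply, Fin.sum_univ_four]
  fin_cases i <;> fin_cases j <;>
    norm_num [h', Jmat, Matrix.vecHead, Matrix.vecTail, Matrix.cons_val_two, Matrix.cons_val_three] <;> ring1

lemma sp4_hinv (d : ℕ) : IsSp4 (hinv d) := by
  unfold IsSp4
  ext i j
  simp only [Matrix.mul_apply, Matrix.transpose_apply, Fin.sum_univ_four]
  fin_cases i <;> fin_cases j <;>
    norm_num [hinv, Jmat, Matrix.vecHead, Matrix.vecTail, Matrix.cons_val_two, Matrix.cons_val_three] <;> ring1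

lemma sp4_emb (γ₁ γ₂ : SL2) : IsSp4 (emb γ₁ γ₂) := by
  unfold IsSp4
  ext i j
  simp only [Matrix.mul_apply, Matrix.transpose_apply, Fin.sum_univ_four]
  fin_cases i <;> fin_cases j <;>
    simp [emb, Jmat, Matrix.vecHead, Matrix.vecTail] <;>
    first
      | ring1
      | linear_combination detg1 γ₁
      | linear_combination -detg1 γ₁
      | linear_combination detg1 γ₂
      | linear_combination -detg1 γ₂

set_option maxHeartbeats 1000000 in
lemma emb_mul (γ₁ γ₂ δ₁ δ₂ : SL2) :
    emb γ₁ γ₂ * emb δ₁ δ₂ = emb (γ₁ * δ₁) (γ₂ * δ₂) := by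
  have c1 : ((γ₁ * δ₁ : SL2) : M2) = (γ₁ : M2) * (δ₁ : M2) := rfl
  have c2 : ((γ₂ * δ₂ : SL2) : M2) = (γ₂ : M2) * (δ₂ : M2) := rfl
  ext i j
  fin_cases i <;> fin_cases j <;>
    simp [emb, c1, c2, Matrix.mul_apply, Fin.sum_univ_four, Fin.sum_univ_two,
      Matrix.vecHead, Matrix.vecTail] <;> ring1

lemma emb_one : emb 1 1 = 1 := by
  ext i j
  fin_cases i <;> fin_cases j <;>
    simp [emb, Matrix.one_apply, Matrix.vecHead, Matrix.vecTail]


lemma Pent (d : ℕ) (γ₁ γ₂ : SL2) :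
    (h' d * emb γ₁ γ₂) 2 0 = (γ₁ : M2) 1 0 ∧
    (h' d * emb γ₁ γ₂) 3 0 = (d : ℤ) * (γ₁ : M2) 0 0 ∧
    (h' d * emb γ₁ γ₂) 2 2 = (γ₁ : M2) 1 1 ∧
    (h' d * emb γ₁ γ₂) 3 2 = (d : ℤ) * (γ₁ : M2) 0 1 := by
  refine ⟨?_, ?_, ?_, ?_⟩ <;>
    (simp only [Matrix.mul_apply, Fin.sum_univ_four]
     norm_num [h', emb, Matrix.vecHead, Matrix.vecTail, Matrix.cons_val_two, Matrix.cons_val_three])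

lemma coset_inv {g u : Matrix (Fin 4) (Fin 4) ℤ} {d : ℕ} {γ₁ γ₂ : SL2}
    (hu : IsGammaInf u) (hg : g = u * h' d * emb γ₁ γ₂) :
    (g 2 0 * g 3 2 - g 2 2 * g 3 0).natAbs = d := by
  obtain ⟨husp, h20, h21, h30, h31⟩ := hu
  obtain ⟨p20, p30, p22, p32⟩ := Pent d γ₁ γ₂
  have hgP : g = u * (h' d * emb γ₁ γ₂) := by rw [hg, Matrix.mul_assoc]
  set P : Matrix (Fin 4) (Fin 4) ℤ := h' d * emb γ₁ γ₂ with hPdef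
  have e20 : g 2 0 = u 2 2 * (γ₁ : M2) 1 0 + u 2 3 * ((d:ℤ) * (γ₁ : M2) 0 0) := by
    rw [hgP]
    simp only [Matrix.mul_apply, Fin.sum_univ_four]
    rw [h20, h21, p20, p30]; ring
  have e30 : g 3 0 = u 3 2 * (γ₁ : M2) 1 0 + u 3 3 * ((d:ℤ) * (γ₁ : M2) 0 0) := by
    rw [hgP]
    simp only [Matrix.mul_apply, Fin.sum_univ_four]
    rw [h30, h31, p20, p30]; ring
  have e22 : g 2 2 = u 2 2 * (γ₁ : M2) 1 1 + u 2 3 * ((d:ℤ) * (γ₁ : M2) 0 1) := by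
    rw [hgP]
    simp only [Matrix.mul_apply, Fin.sum_univ_four]
    rw [h20, h21, p22, p32]; ring
  have e32 : g 3 2 = u 3 2 * (γ₁ : M2) 1 1 + u 3 3 * ((d:ℤ) * (γ₁ : M2) 0 1) := by
    rw [hgP]
    simp only [Matrix.mul_apply, Fin.sum_univ_four]
    rw [h30, h31, p22, p32]; ring
  have hXdet : g 2 0 * g 3 2 - g 2 2 * g 3 0
      = -(d:ℤ) * (u 2 2 * u 3 3 - u 2 3 * u 3 2) := by
    rw [e20, e22, e30, e32]
    linear_combination (-(d:ℤ) * (u 2 2 * u 3 3 - u 2 3 * u 3 2)) * detg1 γ₁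
  -- the lower-right block of u is unimodular
  have hJ := husp
  unfold IsSp4 at hJ
  have r1 := congrFun (congrFun hJ 0) 2
  have r2 := congrFun (congrFun hJ 0) 3
  have r3 := congrFun (congrFun hJ 1) 2
  have r4 := congrFun (congrFun hJ 1) 3
  simp only [Matrix.mul_apply, Matrix.transpose_apply, Fin.sum_univ_four] at r1 r2 r3 r4
  norm_num [Jmat, Matrix.vecHead, Matrix.vecTail, Matrix.cons_val_two, Matrix.cons_val_three, h20, h21, h30, h31] at r1 r2 r3 r4
  have hKD : (!![u 0 0, u 1 0; u 0 1, u 1 1] : M2) * !![u 2 2, u 2 3; u 3 2, u 3 3] = 1 := by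
    ext i j
    fin_cases i <;> fin_cases j <;>
      simp [Matrix.mul_apply, Fin.sum_univ_two, Matrix.one_apply,
        Matrix.vecHead, Matrix.vecTail] <;>
      first
        | linear_combination r1
        | linear_combination r2
        | linear_combination r3
        | linear_combination r4
        | linear_combination -r1
        | linear_combination -r2
        | linear_combination -r3
        | linear_combination -r4
  have hDu : IsUnit (u 2 2 * u 3 3 - u 2 3 * u 3 2) := by
    have hdet := congrArg Matrix.det hKD
    rw [Matrix.det_mul, Matrix.det_one, Matrix.det_fin_two_of, Matrix.det_fin_two_of] at hdet
    exact IsUnit.of_mul_eq_one _ (by rw [mul_comm] at hdet; exact hdet)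
  rw [hXdet]
  rcases Int.isUnit_iff.mp hDu with h | h <;> rw [h] <;> simp

lemma sym_of_sp4 {g : Matrix (Fin 4) (Fin 4) ℤ} (hg : IsSp4 g) :
    (Xg g).det + (Yg g).det = 0 := by
  have h5 := sp4_gJgT hg
  have h23 := congrFun (congrFun h5 2) 3
  simp only [Matrix.mul_apply, Matrix.transpose_apply, Fin.sum_univ_four] at h23
  norm_num [Jmat, Matrix.vecHead, Matrix.vecTail, Matrix.cons_val_two, Matrix.cons_val_three] at h23
  unfold Xg Yg
  rw [Matrix.det_fin_two_of, Matrix.det_fin_two_of]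
  linear_combination h23

lemma prim_of_sp4 {g : Matrix (Fin 4) (Fin 4) ℤ} (hg : IsSp4 g) : Prim (Xg g) (Yg g) := by
  refine ⟨Matrix.of ![g 0, g 1], ?_⟩
  rw [stk_eq]
  exact sp4_detUnit hg

theorem sp4_garrett_decomposition :
    (∀ (d : ℕ) (u : Matrix (Fin 4) (Fin 4) ℤ)
        (γ₁ γ₂ : Matrix.SpecialLinearGroup (Fin 2) ℤ),
      IsGammaInf u → IsSp4 (u * h' d * emb γ₁ γ₂))
    ∧
    (∀ g : Matrix (Fin 4) (Fin 4) ℤ, IsSp4 g →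
      ∃! d : ℕ, ∃ (u : Matrix (Fin 4) (Fin 4) ℤ)
        (γ₁ γ₂ : Matrix.SpecialLinearGroup (Fin 2) ℤ),
        IsGammaInf u ∧ g = u * h' d * emb γ₁ γ₂) := by
  constructor
  · intro d u γ₁ γ₂ hu
    exact sp4_mul (sp4_mul hu.1 (sp4_h' d)) (sp4_emb γ₁ γ₂)
  · intro g hg
    obtain ⟨d, M, γ₁, γ₂, hX, hY⟩ := key (Xg g) (Yg g) (sym_of_sp4 hg) (prim_of_sp4 hg)
    set u : Matrix (Fin 4) (Fin 4) ℤ := g * emb γ₁⁻¹ γ₂⁻¹ * hinv d with hu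
    have hembinv : emb γ₁⁻¹ γ₂⁻¹ * emb γ₁ γ₂ = 1 := by
      rw [emb_mul, inv_mul_cancel, inv_mul_cancel, emb_one]
    have hembinv' : emb γ₁ γ₂ * emb γ₁⁻¹ γ₂⁻¹ = 1 := by
      rw [emb_mul, mul_inv_cancel, mul_inv_cancel, emb_one]
    have hmain : g = u * h' d * emb γ₁ γ₂ := by
      rw [hu]
      calc g = g * (emb γ₁⁻¹ γ₂⁻¹ * ((hinv d * h' d) * emb γ₁ γ₂)) := by
            rw [hinv_h', Matrix.one_mul, hembinv, Matrix.mul_one]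
        _ = g * emb γ₁⁻¹ γ₂⁻¹ * hinv d * h' d * emb γ₁ γ₂ := by
            simp only [Matrix.mul_assoc]
    have husp : IsSp4 u := by
      rw [hu]
      exact sp4_mul (sp4_mul hg (sp4_emb γ₁⁻¹ γ₂⁻¹)) (sp4_hinv d)
    have hWu : Wof u = M * Wof (1 : Matrix (Fin 4) (Fin 4) ℤ) := by
      have hWg : Wof g = M * Wm (X0 (d:ℤ)) (Y0 (d:ℤ)) * emb γ₁ γ₂ := by
        rw [Wof_eq, hX, hY, Wm_right, Wm_left]
      calc Wof u = Wof g * emb γ₁⁻¹ γ₂⁻¹ * hinv d := by rw [hu, Wof_mul, Wof_mul]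
        _ = M * Wm (X0 (d:ℤ)) (Y0 (d:ℤ)) * (emb γ₁ γ₂ * emb γ₁⁻¹ γ₂⁻¹) * hinv d := by
            rw [hWg]; simp only [Matrix.mul_assoc]
        _ = M * (Wm (X0 (d:ℤ)) (Y0 (d:ℤ)) * hinv d) := by
            rw [hembinv', Matrix.mul_one, Matrix.mul_assoc]
        _ = M * (Wof (h' d) * hinv d) := by rw [Wof_h']
        _ = M * Wof 1 := by rw [← Wof_mul, h'_hinv]
    have hz : ∀ j : Fin 4, (M * Wof (1 : Matrix (Fin 4) (Fin 4) ℤ)) 0 j = M 0 0 * (1 : Matrix (Fin 4) (Fin 4) ℤ) 2 j + M 0 1 * (1 : Matrix (Fin 4) (Fin 4) ℤ) 3 j := by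
      intro j; simp [Wof, Matrix.mul_apply, Fin.sum_univ_two]
    have z20 : u 2 0 = 0 := by
      have := congrFun (congrFun hWu 0) 0
      simp [Wof, Matrix.mul_apply, Fin.sum_univ_two, Matrix.one_apply] at this
      exact this
    have z21 : u 2 1 = 0 := by
      have := congrFun (congrFun hWu 0) 1
      simp [Wof, Matrix.mul_apply, Fin.sum_univ_two, Matrix.one_apply] at this
      exact this
    have z30 : u 3 0 = 0 := by
      have := congrFun (congrFun hWu 1) 0
      simp [Wof, Matrix.mul_apply, Fin.sum_univ_two, Matrix.one_apply] at this
      exact this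
    have z31 : u 3 1 = 0 := by
      have := congrFun (congrFun hWu 1) 1
      simp [Wof, Matrix.mul_apply, Fin.sum_univ_two, Matrix.one_apply] at this
      exact this
    have hGI : IsGammaInf u := ⟨husp, z20, z21, z30, z31⟩
    refine ⟨d, ⟨u, γ₁, γ₂, hGI, hmain⟩, ?_⟩
    rintro d' ⟨u', δ₁, δ₂, hu', hgeq'⟩
    rw [← coset_inv hu' hgeq', ← coset_inv hGI hmain]
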